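/- Suppose $L(\cdot,y)$ is $m_x$-strongly convex for each $y$ with unique minimizer $x^*(y)$, and $\nabla_y L$ is $\ell_{yx}$-Lipschitz in $x$. Then for all $(x,y)$, $\|\nabla_y L(x,y) - \nabla\psi(y)\| \le (\ell_{yx}/m_x)\|\nabla_x L(x,y)\|$, where $\psi(y)=\min_x L(x,y)$ and $\nabla\psi(y)=\nabla_y L(x^*(y),y)$. -/

import Mathlib

open Set Filter Topology

variable {E : Type*} [NormedAddCommGroup E] [InnerProductSpace ℝ E] [CompleteSpace E]

lemma strong_convex_lower_bound {f : E → ℝ} {m : ℝ}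
    (hconv : StrongConvexOn univ m f) {x x' g : E}
    (hg : HasGradientAt f g x) :
    f x + inner ℝ g (x' - x) + m / 2 * ‖x' - x‖ ^ 2 ≤ f x' := by
  set v := x' - x with hv
  set c : ℝ := inner ℝ g v with hc
  have hline : HasDerivAt (fun t : ℝ => x + t • v) v 0 := by
    simpa using ((hasDerivAt_id (0:ℝ)).smul_const v).const_add x
  have hφ : HasDerivAt (fun t : ℝ => f (x + t • v)) c 0 := by
    have hfd : HasFDerivAt f ((InnerProductSpace.toDual ℝ E) g) ((fun t : ℝ => x + t • v) 0) := by
      simpa using hg.hasFDerivAt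
    have := hfd.comp_hasDerivAt 0 hline
    simp [hc] at this; exact this
  set K : ℝ := m / 2 * ‖x - x'‖ ^ 2 with hK
  have hslope : Tendsto (slope (fun t : ℝ => f (x + t • v)) 0) (𝓝[>] 0) (𝓝 c) :=
    (hasDerivAt_iff_tendsto_slope.mp hφ).mono_left
      (nhdsWithin_mono 0 (fun t ht => by simpa using ne_of_gt ht))
  have hbound : Tendsto (fun t : ℝ => f x' - f x - (1 - t) * K) (𝓝[>] 0) (𝓝 (f x' - f x - K)) := by
    have h1 : Tendsto (fun t : ℝ => f x' - f x - (1 - t) * K) (𝓝 0)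
        (𝓝 (f x' - f x - (1 - 0) * K)) :=
      (tendsto_const_nhds.sub (((tendsto_const_nhds.sub tendsto_id).mul tendsto_const_nhds)))
    simpa using h1.mono_left nhdsWithin_le_nhds
  have hle : c ≤ f x' - f x - K := by
    refine le_of_tendsto_of_tendsto hslope hbound ?_
    filter_upwards [Ioo_mem_nhdsGT_of_mem (by norm_num : (0:ℝ) ∈ Ico 0 1)] with t ht
    have ht0 : 0 < t := ht.1
    have ht1 : t < 1 := ht.2
    have hcx : f ((1 - t) • x + t • x') ≤ (1 - t) • f x + t • f x' - (1 - t) * t * (m / 2 * ‖x - x'‖ ^ 2) :=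
      hconv.2 (mem_univ x) (mem_univ x') (by linarith) ht0.le (by ring)
    have hpt : x + t • v = (1 - t) • x + t • x' := by
      simp [hv, smul_sub, sub_smul]; abel
    have h2 : f ((1 - t) • x + t • x') - f x ≤ (f x' - f x - (1 - t) * K) * t := by
      simp only [smul_eq_mul] at hcx
      rw [hK]; nlinarith
    rw [slope_def_field, hpt]
    rw [show x + (0:ℝ) • v = x by simp, sub_zero, div_le_iff₀ ht0]
    exact h2
  have hnorm : m / 2 * ‖v‖ ^ 2 = K := by rw [hK, hv, norm_sub_rev]
  linarith

lemma strong_mono {f : E → ℝ} {m : ℝ}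
    (hconv : StrongConvexOn univ m f) {x x' g g' : E}
    (hg : HasGradientAt f g x) (hg' : HasGradientAt f g' x') :
    m * ‖x - x'‖ ^ 2 ≤ inner ℝ (g - g') (x - x') := by
  have h1 := strong_convex_lower_bound hconv (x' := x') hg
  have h2 := strong_convex_lower_bound hconv (x' := x) hg'
  have e1 : (inner ℝ (g - g') (x - x') : ℝ) = inner ℝ g (x - x') + inner ℝ g' (x' - x) := by
    rw [inner_sub_left]; rw [show x' - x = -(x - x') by abel, inner_neg_right]; ring
  have e2 : (inner ℝ g (x' - x) : ℝ) = - inner ℝ g (x - x') := by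
    rw [show x' - x = -(x - x') by abel, inner_neg_right]
  have hn : ‖x' - x‖ = ‖x - x'‖ := norm_sub_rev _ _
  have e3 : (inner ℝ g' (x' - x) : ℝ) = - inner ℝ g' (x - x') := by
    rw [show x' - x = -(x - x') by abel, inner_neg_right]
  rw [e1, e3]
  rw [e2] at h1
  rw [hn] at h1
  linarith



open Set

/-- `‖∇ᵧL(x,y) - ∇ψ(y)‖ ≤ (ℓyx/mx) ‖∇ₓL(x,y)‖`. -/
theorem dual_gradient_tracking {d p : ℕ}
    (L : EuclideanSpace ℝ (Fin d) → EuclideanSpace ℝ (Fin p) → ℝ)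
    (gx : EuclideanSpace ℝ (Fin d) → EuclideanSpace ℝ (Fin p) → EuclideanSpace ℝ (Fin d))
    (gy : EuclideanSpace ℝ (Fin d) → EuclideanSpace ℝ (Fin p) → EuclideanSpace ℝ (Fin p))
    (xstar : EuclideanSpace ℝ (Fin p) → EuclideanSpace ℝ (Fin d))
    (ψ : EuclideanSpace ℝ (Fin p) → ℝ)
    (mx ℓyx : ℝ) (hmx : 0 < mx) (hℓyx : 0 ≤ ℓyx)
    (hconv : ∀ y, StrongConvexOn univ mx (fun x => L x y))
    (hgx : ∀ x y, HasGradientAt (fun x' => L x' y) (gx x y) x)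
    (hgy : ∀ x y, HasGradientAt (fun y' => L x y') (gy x y) y)
    (hmin : ∀ y, IsMinOn (fun x => L x y) univ (xstar y))
    (huniq : ∀ y x, IsMinOn (fun x' => L x' y) univ x → x = xstar y)
    (hψ : ∀ y, ψ y = L (xstar y) y)
    (hψgrad : ∀ y, HasGradientAt ψ (gy (xstar y) y) y)
    (hlipyx : ∀ x x' y, ‖gy x y - gy x' y‖ ≤ ℓyx * ‖x - x'‖) :
    ∀ x y, ‖gy x y - gy (xstar y) y‖ ≤ (ℓyx / mx) * ‖gx x y‖ := by
  intro x y
  set xs := xstar y with hxs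
  -- gradient at minimizer is zero
  have hloc : IsLocalMin (fun x' => L x' y) xs := (hmin y).isLocalMin univ_mem
  have hfd0 : (InnerProductSpace.toDual ℝ (EuclideanSpace ℝ (Fin d))) (gx xs y) = 0 :=
    hloc.hasFDerivAt_eq_zero (hgx xs y).hasFDerivAt
  have hzero : gx xs y = 0 := by
    apply (InnerProductSpace.toDual ℝ (EuclideanSpace ℝ (Fin d))).injective
    simpa using hfd0
  -- strong monotonicity
  have hmono := strong_mono (hconv y) (hgx x y) (hgx xs y)
  rw [hzero, sub_zero] at hmono
  have hcs : (inner ℝ (gx x y) (x - xs) : ℝ) ≤ ‖gx x y‖ * ‖x - xs‖ := real_inner_le_norm _ _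
  have hkey : mx * ‖x - xs‖ ≤ ‖gx x y‖ := by
    rcases eq_or_lt_of_le (norm_nonneg (x - xs)) with h0 | h0
    · rw [← h0]; simpa using norm_nonneg (gx x y)
    · have : mx * ‖x - xs‖ * ‖x - xs‖ ≤ ‖gx x y‖ * ‖x - xs‖ := by nlinarith
      exact le_of_mul_le_mul_right this h0
  calc ‖gy x y - gy xs y‖ ≤ ℓyx * ‖x - xs‖ := hlipyx x xs y
    _ ≤ ℓyx * (‖gx x y‖ / mx) := by
        apply mul_le_mul_of_nonneg_left _ hℓyx
        rw [le_div_iff₀ hmx]; linarith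
    _ = (ℓyx / mx) * ‖gx x y‖ := by ring
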